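/- On the elliptic curve E : y^2 + 7102196·xy + 50689165733152681735·y = x^3 + 9577255322635·x^2 over Q, the point (0,0) is a rational point of order exactly 5. -/

import Mathlib

def E : WeierstrassCurve.Affine ℚ :=
  ⟨7102196, 9577255322635, 50689165733152681735, 0, 0⟩

namespace WeierstrassCurve.Affine.Point

lemma some_eq_some {F : Type*} [Field F] {W : WeierstrassCurve.Affine F} {x y x' y' : F}
    (h : W.Nonsingular x y) (h' : W.Nonsingular x' y') (hx : x = x') (hy : y = y') :
    some _ _ h = some _ _ h' := by subst hx; subst hy; rfl

end WeierstrassCurve.Affine.Point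

open WeierstrassCurve.Affine WeierstrassCurve.Affine.Point

lemma hP : E.Nonsingular 0 0 := by
  rw [nonsingular_iff, equation_iff]
  norm_num [E, WeierstrassCurve.Affine.negY]

lemma hQ : E.Nonsingular (-9577255322635) 17330378710244324725 := by
  rw [nonsingular_iff, equation_iff]
  norm_num [E, WeierstrassCurve.Affine.negY]

/-- On the smallest-conductor rank-8 curve with torsion `ℤ/5ℤ`, the point `(0,0)` has
order exactly 5. -/
theorem point_order_five :
    ∃ h : E.Nonsingular 0 0, addOrderOf (WeierstrassCurve.Affine.Point.some _ _ h) = 5 := by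
  refine ⟨hP, ?_⟩
  have hy1 : (0 : ℚ) ≠ E.negY 0 0 := by norm_num [E, WeierstrassCurve.Affine.negY]
  have hy2 : (17330378710244324725 : ℚ) ≠ E.negY (-9577255322635) 17330378710244324725 := by
    norm_num [E, WeierstrassCurve.Affine.negY]
  have h2 : some _ _ hP + some _ _ hP = some _ _ hQ := by
    rw [add_self_of_Y_ne hy1]
    refine some_eq_some _ _ ?_ ?_ <;>
      · rw [WeierstrassCurve.Affine.slope_of_Y_ne rfl hy1]
        norm_num [E, WeierstrassCurve.Affine.negY, WeierstrassCurve.Affine.addX,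
          WeierstrassCurve.Affine.addY, WeierstrassCurve.Affine.negAddY]
  have h4 : some _ _ hQ + some _ _ hQ = -some _ _ hP := by
    rw [add_self_of_Y_ne hy2, neg_some]
    refine some_eq_some _ _ ?_ ?_ <;>
      · rw [WeierstrassCurve.Affine.slope_of_Y_ne rfl hy2]
        norm_num [E, WeierstrassCurve.Affine.negY, WeierstrassCurve.Affine.addX,
          WeierstrassCurve.Affine.addY, WeierstrassCurve.Affine.negAddY]
  have h5 : (5 : ℕ) • some _ _ hP = 0 := by
    have : (5 : ℕ) • some _ _ hP = some _ _ hP + some _ _ hP + (some _ _ hP + some _ _ hP) + some _ _ hP := by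
      rw [show (5 : ℕ) = 1 + 1 + 1 + 1 + 1 from rfl]
      simp [add_nsmul, one_nsmul]
      abel
    rw [this, h2, h4, neg_add_cancel]
  haveI : Fact (Nat.Prime 5) := ⟨by norm_num⟩
  exact addOrderOf_eq_prime h5 (some_ne_zero hP)
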